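/- Let f^{(u)}, f^{(v)} ∈ ℤ≥0ⁿ be frequency vectors of an insertion-only stream at times u ≤ v, and H ∈ [n]. If ‖f^{(v)}‖₂ - ‖f^{(u)}‖₂ ≥ α√F₂ (where F₂ = ‖f^{(m)}‖₂² for the final frequency vector, v ≤ m) and f_H ≥ K√(F₂ - f_H²) with K·α ≥ 2, then the increment frequency satisfies f_H^{(u:v)} ≥ (Kα/2)·√(F₂ - f_H²), i.e., on the interval (u,v] the item H has frequency at least (Kα/2) times the ℓ₂ norm of the non-H tail. -/

import Mathlib

theorem stmt_18 (n : ℕ) (fu fv fm : Fin n → ℝ) (H : Fin n) (α K : ℝ)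
    (hα : 0 < α)
    (hu0 : ∀ i, 0 ≤ fu i)
    (huv : ∀ i, fu i ≤ fv i)
    (hvm : ∀ i, fv i ≤ fm i)
    (hgrow : α * Real.sqrt (∑ i, fm i ^ 2) ≤
      Real.sqrt (∑ i, fv i ^ 2) - Real.sqrt (∑ i, fu i ^ 2))
    (hheavy : K * Real.sqrt ((∑ i, fm i ^ 2) - fm H ^ 2) ≤ fm H)
    (hKα : 2 ≤ K * α) :
    (K * α / 2) * Real.sqrt ((∑ i, fm i ^ 2) - fm H ^ 2) ≤ fv H - fu H := by
  set F₂ : ℝ := ∑ i, fm i ^ 2 with hF₂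
  set T : ℝ := Real.sqrt (F₂ - fm H ^ 2) with hT
  have hT0 : 0 ≤ T := Real.sqrt_nonneg _
  set g : Fin n → ℝ := fun i => fv i - fu i with hg
  have hg0 : ∀ i, 0 ≤ g i := fun i => sub_nonneg.mpr (huv i)
  have hgm : ∀ i, g i ≤ fm i := fun i => le_trans (by simp [hg]; nlinarith [hu0 i]) (hvm i)
  -- tail sums
  have htail : F₂ - fm H ^ 2 = ∑ i ∈ Finset.univ.erase H, fm i ^ 2 := by
    have h := Finset.sum_erase_add Finset.univ (fun i => fm i ^ 2) (Finset.mem_univ H)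
    rw [hF₂]
    linarith [h]
  have htail0 : 0 ≤ F₂ - fm H ^ 2 := by
    rw [htail]; exact Finset.sum_nonneg fun i _ => sq_nonneg _
  have hT2 : T ^ 2 = F₂ - fm H ^ 2 := Real.sq_sqrt htail0
  -- triangle inequality: ‖fv‖ ≤ ‖fu‖ + ‖g‖
  have htri : Real.sqrt (∑ i, fv i ^ 2) ≤
      Real.sqrt (∑ i, fu i ^ 2) + Real.sqrt (∑ i, g i ^ 2) := by
    have h1 : ∀ x : EuclideanSpace ℝ (Fin n), ‖x‖ = Real.sqrt (∑ i, x i ^ 2) := by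
      intro x
      rw [EuclideanSpace.norm_eq]
      congr 1
      exact Finset.sum_congr rfl fun i _ => by rw [Real.norm_eq_abs, sq_abs]
    have h2 := norm_add_le (E := EuclideanSpace ℝ (Fin n)) (WithLp.toLp 2 fu) (WithLp.toLp 2 g)
    rw [h1, h1, h1] at h2
    simp only [PiLp.add_apply, PiLp.toLp_apply] at h2
    have h4 : ∑ i, (fu i + g i) ^ 2 = ∑ i, fv i ^ 2 :=
      Finset.sum_congr rfl fun i _ => by simp [hg]
    rw [h4] at h2
    exact h2
  -- ‖g‖ ≤ g H + T
  have hgbound : Real.sqrt (∑ i, g i ^ 2) ≤ g H + T := by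
    have hsum : ∑ i, g i ^ 2 ≤ g H ^ 2 + T ^ 2 := by
      have h := Finset.sum_erase_add Finset.univ (fun i => g i ^ 2) (Finset.mem_univ H)
      have hS : ∑ i ∈ Finset.univ.erase H, g i ^ 2 ≤ ∑ i ∈ Finset.univ.erase H, fm i ^ 2 := by
        apply Finset.sum_le_sum
        intro i _
        exact pow_le_pow_left₀ (hg0 i) (hgm i) 2
      rw [hT2, htail]
      linarith [h]
    have hle : ∑ i, g i ^ 2 ≤ (g H + T) ^ 2 := by nlinarith [hg0 H]
    calc Real.sqrt (∑ i, g i ^ 2) ≤ Real.sqrt ((g H + T) ^ 2) := Real.sqrt_le_sqrt hle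
      _ = g H + T := Real.sqrt_sq (add_nonneg (hg0 H) hT0)
  -- fm H ≤ √F₂
  have hmH0 : 0 ≤ fm H := le_trans (hu0 H) (le_trans (huv H) (hvm H))
  have hmle : fm H ≤ Real.sqrt F₂ := by
    have : fm H ^ 2 ≤ F₂ := by linarith
    calc fm H = Real.sqrt (fm H ^ 2) := (Real.sqrt_sq hmH0).symm
      _ ≤ Real.sqrt F₂ := Real.sqrt_le_sqrt this
  -- combine
  have hchain : α * K * T ≤ g H + T := by
    have h1 : α * (K * T) ≤ α * fm H := mul_le_mul_of_nonneg_left hheavy hα.le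
    have h2 : α * fm H ≤ α * Real.sqrt F₂ := mul_le_mul_of_nonneg_left hmle hα.le
    have h3 : α * Real.sqrt F₂ ≤ g H + T := le_trans hgrow (by linarith [htri, hgbound])
    nlinarith
  have hgH : g H = fv H - fu H := rfl
  rw [← hgH] at *
  have hp : 0 ≤ (K * α - 2) * T := mul_nonneg (by linarith) hT0
  clear_value T g
  nlinarith [hp, hchain]
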